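/- arXiv:2308.12204 — 2 statements merged into one kernel-verified Lean document; each statement's English description precedes it below -/
import Mathlib

section
/- Let R be a commutative ring, d_1 ≥ … ≥ d_n integers, D = diag(t^{d_1}, …, t^{d_n}) ∈ GL_n(R((t))), and let K₁ = {k ∈ GL_n(R[[t]]) : k ≡ I mod t}. Suppose g_1, g_2, h_1, h_2 ∈ GL_n(R) and k_1, k_2 ∈ K₁ satisfy g_1⁻¹ D h_1 = k_1⁻¹ g_2⁻¹ D h_2 k_2 in GL_n(R((t))). Then there exist p_−, p_+ ∈ GL_n(R) with: p_− lies in P_− (entries vanish when d_i > d_j), p_+ lies in P_+ (entries vanish when d_i < d_j), p_− and p_+ have the same Levi component (equal (i,j) entries whenever d_i = d_j), and g_1 = p_−⁻¹ g_2, h_1 = p_+⁻¹ h_2. -/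
open Matrix

noncomputable section

/-- The inclusion `GL_n(R[[t]]) → GL_n(R((t)))`. -/
def psUnits (R : Type*) [CommRing R] (n : ℕ) :
    GL (Fin n) (PowerSeries R) →* GL (Fin n) (LaurentSeries R) :=
  Units.map ((HahnSeries.ofPowerSeries ℤ R).mapMatrix).toMonoidHom

/-- The inclusion `GL_n(R) → GL_n(R((t)))` as constant matrices. -/
def cUnits (R : Type*) [CommRing R] (n : ℕ) :
    GL (Fin n) R →* GL (Fin n) (LaurentSeries R) :=
  Units.map (((HahnSeries.ofPowerSeries ℤ R).comp (PowerSeries.C : R →+* PowerSeries R)).mapMatrix).toMonoidHom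

/-- Reduction modulo `t` of a matrix over `R[[t]]`. -/
def redMat (R : Type*) [CommRing R] (n : ℕ) :
    Matrix (Fin n) (Fin n) (PowerSeries R) →+* Matrix (Fin n) (Fin n) R :=
  (PowerSeries.constantCoeff : PowerSeries R →+* R).mapMatrix

section Aux

variable {R : Type*} [CommRing R]

lemma ops_coeff_neg (f : PowerSeries R) {m : ℤ} (hm : m < 0) :
    (HahnSeries.ofPowerSeries ℤ R f).coeff m = 0 := by
  rw [HahnSeries.ofPowerSeries_apply]
  apply HahnSeries.embDomain_notin_range
  rintro ⟨k, hk⟩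
  have : ((k : ℤ)) = m := hk
  omega

lemma ops_coeff_zero (f : PowerSeries R) :
    (HahnSeries.ofPowerSeries ℤ R f).coeff (0 : ℤ) = PowerSeries.constantCoeff f := by
  have := HahnSeries.ofPowerSeries_apply_coeff (Γ := ℤ) f 0
  simpa using this

lemma key_scalar (f g : PowerSeries R) (a b : ℤ)
    (h : HahnSeries.ofPowerSeries ℤ R f * HahnSeries.single b 1
       = HahnSeries.single a 1 * HahnSeries.ofPowerSeries ℤ R g) :
    (a > b → PowerSeries.constantCoeff f = 0) ∧
    (a < b → PowerSeries.constantCoeff g = 0) ∧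
    (a = b → PowerSeries.constantCoeff f = PowerSeries.constantCoeff g) := by
  have hb : PowerSeries.constantCoeff f
      = (HahnSeries.ofPowerSeries ℤ R g).coeff (b - a) := by
    have := congrArg (fun x => HahnSeries.coeff x (0 + b)) h
    simp only [HahnSeries.coeff_mul_single_add, mul_one] at this
    rw [ops_coeff_zero] at this
    rw [this, show (0 : ℤ) + b = (b - a) + a by ring, HahnSeries.coeff_single_mul_add, one_mul]
  have ha : (HahnSeries.ofPowerSeries ℤ R f).coeff (a - b)
      = PowerSeries.constantCoeff g := by
    have := congrArg (fun x => HahnSeries.coeff x (0 + a)) h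
    simp only [HahnSeries.coeff_single_mul_add, one_mul] at this
    rw [ops_coeff_zero] at this
    rw [← this, show (0 : ℤ) + a = (a - b) + b by ring, HahnSeries.coeff_mul_single_add, mul_one]
  refine ⟨fun hab => ?_, fun hab => ?_, fun hab => ?_⟩
  · rw [hb, ops_coeff_neg _ (by omega)]
  · rw [← ha, ops_coeff_neg _ (by omega)]
  · rw [hb, hab, sub_self, ops_coeff_zero]

/-- Constant units into power series units. -/
def cPS (R : Type*) [CommRing R] (n : ℕ) :
    GL (Fin n) R →* GL (Fin n) (PowerSeries R) :=
  Units.map ((PowerSeries.C : R →+* PowerSeries R).mapMatrix).toMonoidHom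

lemma cUnits_eq (n : ℕ) (g : GL (Fin n) R) :
    cUnits R n g = psUnits R n (cPS R n g) := by
  ext i j
  simp [cUnits, psUnits, cPS, RingHom.mapMatrix_apply, Matrix.map_apply]

lemma redMat_cPS (n : ℕ) (g : GL (Fin n) R) :
    redMat R n ((cPS R n g : GL (Fin n) (PowerSeries R)) :
      Matrix (Fin n) (Fin n) (PowerSeries R)) = g := by
  ext i j
  simp [redMat, cPS, RingHom.mapMatrix_apply, Matrix.map_apply]

end Aux

/-- if `g₁⁻¹ D h₁ = k₁⁻¹ g₂⁻¹ D h₂ k₂` with `k₁, k₂ ∈ K₁` and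
`g₁, g₂, h₁, h₂ ∈ GL_n(R)` (constants), then there is a zip-group element `(p₋, p₊)` with
`g₁ = p₋⁻¹ g₂` and `h₁ = p₊⁻¹ h₂`. -/
theorem viehmann_stmt5 (R : Type*) [CommRing R] (n : ℕ) (hn : 1 ≤ n)
    (d : Fin n → ℤ) (hd : Antitone d)
    (D : GL (Fin n) (LaurentSeries R))
    (hD : (D : Matrix (Fin n) (Fin n) (LaurentSeries R)) =
      Matrix.diagonal fun i => HahnSeries.single (d i) (1 : R))
    (g₁ g₂ h₁ h₂ : GL (Fin n) R) (k₁ k₂ : GL (Fin n) (PowerSeries R))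
    (hk₁ : redMat R n (k₁ : Matrix (Fin n) (Fin n) (PowerSeries R)) = 1)
    (hk₂ : redMat R n (k₂ : Matrix (Fin n) (Fin n) (PowerSeries R)) = 1)
    (heq : cUnits R n g₁⁻¹ * D * cUnits R n h₁ =
      (psUnits R n k₁)⁻¹ * cUnits R n g₂⁻¹ * D * cUnits R n h₂ * psUnits R n k₂) :
    ∃ pm pp : GL (Fin n) R,
      (∀ i j : Fin n, d i > d j → (pm : Matrix (Fin n) (Fin n) R) i j = 0) ∧
      (∀ i j : Fin n, d i < d j → (pp : Matrix (Fin n) (Fin n) R) i j = 0) ∧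
      (∀ i j : Fin n, d i = d j →
        (pm : Matrix (Fin n) (Fin n) R) i j = (pp : Matrix (Fin n) (Fin n) R) i j) ∧
      g₁ = pm⁻¹ * g₂ ∧ h₁ = pp⁻¹ * h₂ := by
  classical
  set A : GL (Fin n) (PowerSeries R) := cPS R n g₂ * k₁ * (cPS R n g₁)⁻¹ with hA
  set B : GL (Fin n) (PowerSeries R) := cPS R n h₂ * k₂ * (cPS R n h₁)⁻¹ with hB
  -- the group-theoretic rearrangement
  have key : psUnits R n A * D = D * psUnits R n B := by
    rw [hA, hB]
    simp only [_root_.map_mul, _root_.map_inv, cUnits_eq] at heq ⊢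
    calc psUnits R n (cPS R n g₂) * psUnits R n k₁ * (psUnits R n (cPS R n g₁))⁻¹ * D
        = psUnits R n (cPS R n g₂) * psUnits R n k₁ *
          ((psUnits R n (cPS R n g₁))⁻¹ * D * psUnits R n (cPS R n h₁)) *
          (psUnits R n (cPS R n h₁))⁻¹ := by group
      _ = psUnits R n (cPS R n g₂) * psUnits R n k₁ *
          ((psUnits R n k₁)⁻¹ * (psUnits R n (cPS R n g₂))⁻¹ * D * psUnits R n (cPS R n h₂) *
            psUnits R n k₂) * (psUnits R n (cPS R n h₁))⁻¹ := by rw [heq]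
      _ = D * (psUnits R n (cPS R n h₂) * psUnits R n k₂ * (psUnits R n (cPS R n h₁))⁻¹) := by
          group
  -- matrix-level equation
  have keyM : ((A : Matrix (Fin n) (Fin n) (PowerSeries R)).map
        (HahnSeries.ofPowerSeries ℤ R)) * (D : Matrix (Fin n) (Fin n) (LaurentSeries R))
      = (D : Matrix (Fin n) (Fin n) (LaurentSeries R)) *
        ((B : Matrix (Fin n) (Fin n) (PowerSeries R)).map (HahnSeries.ofPowerSeries ℤ R)) := by
    have := congrArg (Units.val) key
    simpa [psUnits, Units.coe_map, RingHom.mapMatrix_apply] using this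
  -- entrywise relation
  have hentry : ∀ i j : Fin n,
      HahnSeries.ofPowerSeries ℤ R ((A : Matrix (Fin n) (Fin n) (PowerSeries R)) i j) *
        HahnSeries.single (d j) 1
      = HahnSeries.single (d i) 1 *
        HahnSeries.ofPowerSeries ℤ R ((B : Matrix (Fin n) (Fin n) (PowerSeries R)) i j) := by
    intro i j
    have h0 := keyM
    rw [hD] at h0
    have h1 := congrFun (congrFun h0 i) j
    simpa [Matrix.mul_diagonal, Matrix.diagonal_mul, Matrix.map_apply] using h1
  -- reductions mod t
  have redA : redMat R n ((A : Matrix (Fin n) (Fin n) (PowerSeries R)))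
      = ((g₂ * g₁⁻¹ : GL (Fin n) R) : Matrix (Fin n) (Fin n) R) := by
    rw [hA, ← _root_.map_inv (cPS R n) g₁]
    simp only [Units.val_mul, _root_.map_mul, redMat_cPS, hk₁]
    simp [Units.val_mul]
  have redB : redMat R n ((B : Matrix (Fin n) (Fin n) (PowerSeries R)))
      = ((h₂ * h₁⁻¹ : GL (Fin n) R) : Matrix (Fin n) (Fin n) R) := by
    rw [hB, ← _root_.map_inv (cPS R n) h₁]
    simp only [Units.val_mul, _root_.map_mul, redMat_cPS, hk₂]
    simp [Units.val_mul]
  have eA : ∀ i j : Fin n, ((g₂ * g₁⁻¹ : GL (Fin n) R) : Matrix (Fin n) (Fin n) R) i j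
      = PowerSeries.constantCoeff ((A : Matrix (Fin n) (Fin n) (PowerSeries R)) i j) := by
    intro i j; rw [← redA]; rfl
  have eB : ∀ i j : Fin n, ((h₂ * h₁⁻¹ : GL (Fin n) R) : Matrix (Fin n) (Fin n) R) i j
      = PowerSeries.constantCoeff ((B : Matrix (Fin n) (Fin n) (PowerSeries R)) i j) := by
    intro i j; rw [← redB]; rfl
  refine ⟨g₂ * g₁⁻¹, h₂ * h₁⁻¹, ?_, ?_, ?_, by group, by group⟩
  · intro i j hij
    rw [eA i j]
    exact (key_scalar _ _ (d i) (d j) (hentry i j)).1 hij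
  · intro i j hij
    rw [eB i j]
    exact (key_scalar _ _ (d i) (d j) (hentry i j)).2.1 hij
  · intro i j hij
    rw [eA i j, eB i j]
    exact (key_scalar _ _ (d i) (d j) (hentry i j)).2.2 hij

end
end

section
/- Let R be a commutative ring, d_1 ≥ … ≥ d_n integers, D = diag(t^{d_1}, …, t^{d_n}), and K₁ = ker(GL_n(R[[t]]) → GL_n(R)). Let g ∈ GL_n(R) and let p_+ ∈ GL_n(R) lie in P_+ (entries vanish when d_i < d_j), with Levi component m (the matrix keeping only entries of p_+ with d_i = d_j, which lies in GL_n(R)). Then the elements p_+⁻¹ g D m and p_+⁻¹ g D p_+ of GL_n(R((t))) lie in the same left K₁-coset; equivalently, (p_+⁻¹ g D m)(p_+⁻¹ g D p_+)⁻¹ ∈ K₁. -/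
open Matrix

noncomputable section

/-- Reduction modulo `t` as a group homomorphism `GL_n(R[[t]]) → GL_n(R)`. -/
def redHom (R : Type*) [CommRing R] (n : ℕ) :
    GL (Fin n) (PowerSeries R) →* GL (Fin n) R :=
  Units.map ((PowerSeries.constantCoeff : PowerSeries R →+* R).mapMatrix).toMonoidHom

/-- The congruence subgroup `K₁ = ker(GL_n(R[[t]]) → GL_n(R))`, viewed as a subgroup of
`GL_n(R((t)))`. -/
def K₁ (R : Type*) [CommRing R] (n : ℕ) : Subgroup (GL (Fin n) (LaurentSeries R)) :=
  Subgroup.map (psUnits R n) (redHom R n).ker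

/-- A matrix that is strictly block-triangular with respect to `b` is nilpotent. -/
lemma strict_blockTriangular_pow_eq_zero {S : Type*} [CommRing S] {n : ℕ}
    (b : Fin n → ℤ) (M : Matrix (Fin n) (Fin n) S)
    (hM : ∀ i j, ¬ b i < b j → M i j = 0) : M ^ n = 0 := by
  classical
  set f : Fin n → ℕ := fun i => (Finset.univ.filter fun l => b l < b i).card with hf
  have mono : ∀ i l : Fin n, b i < b l → f i < f l := by
    intro i l hlt
    apply Finset.card_lt_card
    rw [Finset.ssubset_iff_of_subset]
    · exact ⟨i, by simp [hlt], by simp⟩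
    · intro x hx
      simp only [Finset.mem_filter, Finset.mem_univ, true_and] at hx ⊢
      exact hx.trans hlt
  have bound : ∀ j : Fin n, f j < n := by
    intro j
    have : (Finset.univ.filter fun l => b l < b j) ⊂ Finset.univ := by
      rw [Finset.ssubset_iff_of_subset (Finset.filter_subset _ _)]
      exact ⟨j, Finset.mem_univ j, by simp⟩
    simpa [hf] using Finset.card_lt_card this
  have key : ∀ k : ℕ, ∀ i j : Fin n, (M ^ k) i j ≠ 0 → f i + k ≤ f j := by
    intro k
    induction k with
    | zero =>
      intro i j h
      rw [pow_zero] at h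
      by_cases hij : i = j
      · subst hij; omega
      · simp [Matrix.one_apply_ne hij] at h
    | succ k ih =>
      intro i j h
      rw [pow_succ'] at h
      have : ∃ l, M i l * (M ^ k) l j ≠ 0 := by
        by_contra hc
        push_neg at hc
        exact h (by simpa [Matrix.mul_apply] using Finset.sum_eq_zero fun l _ => hc l)
      obtain ⟨l, hl⟩ := this
      have h1 : M i l ≠ 0 := fun h0 => hl (by simp [h0])
      have h2 : (M ^ k) l j ≠ 0 := fun h0 => hl (by simp [h0])
      have hbl : b i < b l := by by_contra hb; exact h1 (hM i l hb)
      have := mono i l hbl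
      have := ih l j h2
      omega
  ext i j
  simp only [Matrix.zero_apply]
  by_contra h
  have := key n i j h
  have := bound j
  omega

/-- for `g ∈ GL_n(R)`, `p₊ ∈ P₊ ⊆ GL_n(R)` with Levi component
`m ∈ GL_n(R)`, the elements `p₊⁻¹ g D m` and `p₊⁻¹ g D p₊` of `GL_n(R((t)))` lie in the
same left `K₁`-coset, i.e. `(p₊⁻¹ g D m)(p₊⁻¹ g D p₊)⁻¹ ∈ K₁`. -/
theorem viehmann_stmt16 (R : Type*) [CommRing R] (n : ℕ) (hn : 1 ≤ n)
    (d : Fin n → ℤ) (hd : Antitone d)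
    (D : GL (Fin n) (LaurentSeries R))
    (hD : (D : Matrix (Fin n) (Fin n) (LaurentSeries R)) =
      Matrix.diagonal fun i => HahnSeries.single (d i) (1 : R))
    (g pp m : GL (Fin n) R)
    (hpp : ∀ i j : Fin n, d i < d j → (pp : Matrix (Fin n) (Fin n) R) i j = 0)
    (hm₁ : ∀ i j : Fin n, d i = d j →
      (m : Matrix (Fin n) (Fin n) R) i j = (pp : Matrix (Fin n) (Fin n) R) i j)
    (hm₂ : ∀ i j : Fin n, d i ≠ d j → (m : Matrix (Fin n) (Fin n) R) i j = 0) :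
    (cUnits R n pp⁻¹ * cUnits R n g * D * cUnits R n m) *
      (cUnits R n pp⁻¹ * cUnits R n g * D * cUnits R n pp)⁻¹ ∈ K₁ R n := by
  classical
  -- block-triangularity of pp and its inverse
  have hppBT : BlockTriangular (pp : Matrix (Fin n) (Fin n) R) (fun i => -d i) := by
    intro i j hij
    exact hpp i j (by dsimp at hij; omega)
  haveI : Invertible (pp : Matrix (Fin n) (Fin n) R) := pp.invertible
  have hinvBT := blockTriangular_inv_of_blockTriangular hppBT
  have hcoeinv : ((pp⁻¹ : GL (Fin n) R) : Matrix (Fin n) (Fin n) R)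
      = ((pp : Matrix (Fin n) (Fin n) R))⁻¹ := Matrix.coe_units_inv pp
  have hinv : ∀ i j : Fin n, d i < d j →
      ((pp⁻¹ : GL (Fin n) R) : Matrix (Fin n) (Fin n) R) i j = 0 := by
    intro i j hij
    rw [hcoeinv]
    exact hinvBT (show -d j < -d i by omega)
  set a : Matrix (Fin n) (Fin n) R := ((m * pp⁻¹ : GL (Fin n) R) : Matrix (Fin n) (Fin n) R)
    with ha
  set Q : Matrix (Fin n) (Fin n) R := ((pp⁻¹ : GL (Fin n) R) : Matrix (Fin n) (Fin n) R)
    with hQ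
  have haQ : a = (m : Matrix (Fin n) (Fin n) R) * Q := Units.val_mul m pp⁻¹
  have hPQ : (pp : Matrix (Fin n) (Fin n) R) * Q = 1 := by
    rw [hQ, ← Units.val_mul, mul_inv_cancel, Units.val_one]
  have claim1 : ∀ i j : Fin n, d i < d j → a i j = 0 := by
    intro i j hij
    rw [haQ, Matrix.mul_apply]
    apply Finset.sum_eq_zero
    intro k _
    by_cases hk : d i = d k
    · rw [hinv k j (hk ▸ hij), mul_zero]
    · rw [hm₂ i k hk, zero_mul]
  have claim2 : ∀ i j : Fin n, d i = d j → a i j = (1 : Matrix (Fin n) (Fin n) R) i j := by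
    intro i j hij
    rw [haQ, Matrix.mul_apply, ← hPQ, Matrix.mul_apply]
    apply Finset.sum_congr rfl
    intro k _
    by_cases hk : d i = d k
    · rw [hm₁ i k hk]
    · rw [hm₂ i k hk, zero_mul]
      rcases lt_or_gt_of_ne hk with h | h
      · rw [hpp i k h, zero_mul]
      · rw [hinv k j (hij ▸ h), mul_zero]
  -- the unipotent part, conjugated by D, as a matrix over power series
  set Mm : Matrix (Fin n) (Fin n) (PowerSeries R) := Matrix.of fun i j =>
    if d j < d i then (PowerSeries.X : PowerSeries R) ^ (d i - d j).toNat
      * (PowerSeries.C : R →+* PowerSeries R) (a i j) else 0 with hMm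
  have hnilMm : IsNilpotent Mm := by
    refine ⟨n, strict_blockTriangular_pow_eq_zero (fun i => -d i) Mm ?_⟩
    intro i j hb
    simp only [hMm, Matrix.of_apply, if_neg (show ¬ d j < d i by omega)]
  have hNu : IsUnit (1 + Mm) := hnilMm.isUnit_one_add
  set Nu : GL (Fin n) (PowerSeries R) := hNu.unit with hNudef
  have hNuval : (Nu : Matrix (Fin n) (Fin n) (PowerSeries R)) = 1 + Mm := hNu.unit_spec
  -- the constant inclusion into power series
  set ρ : GL (Fin n) R →* GL (Fin n) (PowerSeries R) :=
    Units.map ((PowerSeries.C : R →+* PowerSeries R).mapMatrix).toMonoidHom with hρdef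
  have hρred : ∀ u : GL (Fin n) R, redHom R n (ρ u) = u := by
    intro u
    apply Units.ext
    show ((PowerSeries.constantCoeff : PowerSeries R →+* R).mapMatrix)
      (((PowerSeries.C : R →+* PowerSeries R).mapMatrix) (u : Matrix (Fin n) (Fin n) R)) = _
    ext i j
    simp [RingHom.mapMatrix_apply, Matrix.map_apply]
  have hρc : ∀ u : GL (Fin n) R, psUnits R n (ρ u) = cUnits R n u := by
    intro u
    apply Units.ext
    show ((HahnSeries.ofPowerSeries ℤ R).mapMatrix)
        (((PowerSeries.C : R →+* PowerSeries R).mapMatrix) (u : Matrix (Fin n) (Fin n) R))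
      = (((HahnSeries.ofPowerSeries ℤ R).comp (PowerSeries.C : R →+* PowerSeries R)).mapMatrix)
        (u : Matrix (Fin n) (Fin n) R)
    ext i j
    simp [RingHom.mapMatrix_apply, Matrix.map_apply]
  have hNured : redHom R n Nu = 1 := by
    apply Units.ext
    show ((PowerSeries.constantCoeff : PowerSeries R →+* R).mapMatrix) (Nu : Matrix (Fin n) (Fin n) (PowerSeries R))
      = (1 : Matrix (Fin n) (Fin n) R)
    rw [hNuval, map_add, _root_.map_one]
    have : ((PowerSeries.constantCoeff : PowerSeries R →+* R).mapMatrix) Mm = 0 := by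
      ext i j
      simp only [RingHom.mapMatrix_apply, Matrix.map_apply, Matrix.zero_apply, hMm,
        Matrix.of_apply]
      by_cases hij : d j < d i
      · rw [if_pos hij, _root_.map_mul, _root_.map_pow, PowerSeries.constantCoeff_X,
          zero_pow (by omega : (d i - d j).toNat ≠ 0), zero_mul]
      · rw [if_neg hij, _root_.map_zero]
    rw [this, add_zero]
  -- the key identity: psUnits Nu * D = D * cUnits (m * pp⁻¹)
  have E : psUnits R n Nu * D = D * cUnits R n (m * pp⁻¹) := by
    apply Units.ext
    rw [Units.val_mul, Units.val_mul]
    show ((HahnSeries.ofPowerSeries ℤ R).mapMatrix) (Nu : Matrix (Fin n) (Fin n) (PowerSeries R))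
        * (D : Matrix (Fin n) (Fin n) (LaurentSeries R))
      = (D : Matrix (Fin n) (Fin n) (LaurentSeries R))
        * (((HahnSeries.ofPowerSeries ℤ R).comp (PowerSeries.C : R →+* PowerSeries R)).mapMatrix) a
    rw [hD, hNuval]
    refine Matrix.ext fun i j => ?_
    rw [Matrix.mul_diagonal, Matrix.diagonal_mul]
    simp only [RingHom.mapMatrix_apply, Matrix.map_apply, RingHom.comp_apply,
      HahnSeries.ofPowerSeries_C, Matrix.add_apply, hMm, Matrix.of_apply]
    rw [HahnSeries.C_apply, HahnSeries.single_mul_single, add_zero, one_mul]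
    by_cases hij : d j < d i
    · rw [if_pos hij, Matrix.one_apply_ne (fun h : i = j => by subst h; omega), zero_add,
        _root_.map_mul, _root_.map_pow, HahnSeries.ofPowerSeries_X, HahnSeries.ofPowerSeries_C,
        HahnSeries.single_pow, HahnSeries.C_apply, HahnSeries.single_mul_single,
        HahnSeries.single_mul_single]
      have hidx : (d i - d j).toNat • (1:ℤ) + 0 + d j = d i := by
        simp only [nsmul_eq_mul, mul_one, add_zero]
        omega
      rw [hidx, one_pow, one_mul, mul_one]
    · rw [if_neg hij, add_zero]
      by_cases hij2 : i = j
      · subst hij2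
        rw [Matrix.one_apply_eq, _root_.map_one, one_mul, claim2 i i rfl, Matrix.one_apply_eq]
      · rw [Matrix.one_apply_ne hij2, _root_.map_zero, zero_mul]
        by_cases hd3 : d i = d j
        · rw [claim2 i j hd3, Matrix.one_apply_ne hij2, HahnSeries.single_eq_zero]
        · rw [claim1 i j (by omega), HahnSeries.single_eq_zero]
  -- assemble
  set u0 : GL (Fin n) R := pp⁻¹ * g with hu0
  refine ⟨ρ u0 * Nu * (ρ u0)⁻¹, ?_, ?_⟩
  · show redHom R n _ = 1
    rw [_root_.map_mul, _root_.map_mul, map_inv, hρred, hNured, mul_one, mul_inv_cancel]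
  · have E' : psUnits R n Nu = D * cUnits R n (m * pp⁻¹) * D⁻¹ :=
      eq_mul_inv_iff_mul_eq.mpr E
    rw [_root_.map_mul, _root_.map_mul, map_inv, hρc, E', hu0]
    simp only [_root_.map_mul, map_inv, _root_.mul_inv_rev]
    group

end
end
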